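/- Let n ≥ 3, k ≥ 0, let t ≥ 1, and let C_0 = {(x_α,y_α) : 1 ≤ α ≤ 2t+1} be an alternating cycle in the crown S_n^k satisfying the Matching Conditions, where s_α denotes the size of the pair (x_α,y_α). Then the down-set D(C_0) = {(x,y) incomparable : x_α ⪯ x ⪯ y ⪯ y_α for some α} has cardinality Σ_{α=1}^{2t+1} s_α(s_α+1)/2, and D(C_0) is an independent set in G_n^k. -/

import Mathlib

namespace CrownPaper

/-- Indices of the crown `S_n^k` live in `ZMod (n+k)`. The minimal element `a_i` is
incomparable to the maximal element `b_j` iff `(j - i) mod (n+k) ≤ k`. -/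
def Incomp (n k : ℕ) (i j : ZMod (n + k)) : Prop := (j - i).val ≤ k

/-- `a_i < b_j` in the crown `S_n^k` iff `(j - i) mod (n+k) > k`. -/
def CompLt (n k : ℕ) (i j : ZMod (n + k)) : Prop := k < (j - i).val

/-- A pair `(a_i, b_j)` is recorded as its pair of indices. -/
abbrev Pair (n k : ℕ) := ZMod (n + k) × ZMod (n + k)

/-- `(a_i, b_j)` is an incomparable (critical) pair. -/
def IsIncPair (n k : ℕ) (p : Pair n k) : Prop := Incomp n k p.1 p.2

/-- Adjacency in the graph `G_n^k` of critical pairs: `(a_i,b_j)` and `(a_p,b_q)` are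
adjacent iff `a_i < b_q` and `a_p < b_j` in `S_n^k`. -/
def Adj (n k : ℕ) (p q : Pair n k) : Prop :=
  CompLt n k p.1 q.2 ∧ CompLt n k q.1 p.2

/-- An independent set of critical pairs in `G_n^k`. -/
def Indep (n k : ℕ) (S : Set (Pair n k)) : Prop :=
  (∀ p ∈ S, IsIncPair n k p) ∧ ∀ p ∈ S, ∀ q ∈ S, ¬ Adj n k p q

/-- A set of pairs is reversible when some linear extension of the crown (encoded as an
injective map into `ℕ` on the disjoint union `A ⊕ B` preserving all strict comparabilities
`a_i < b_j`) puts `a` above `b` for every pair `(a,b)` of the set. -/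
def Reversible (n k : ℕ) (S : Set (Pair n k)) : Prop :=
  ∃ f : (ZMod (n + k)) ⊕ (ZMod (n + k)) → ℕ,
    Function.Injective f ∧
    (∀ i j : ZMod (n + k), CompLt n k i j → f (Sum.inl i) < f (Sum.inr j)) ∧
    ∀ p ∈ S, f (Sum.inr p.2) < f (Sum.inl p.1)

/-- The down-set `D(C₀)` of an alternating cycle: all incomparable pairs contained in
some `(x_α, y_α)` (measuring containment along the clockwise arc from `x_α`). -/
def DownSet (n k t : ℕ) (x y : ZMod (2 * t + 1) → ZMod (n + k)) : Set (Pair n k) :=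
  {p | IsIncPair n k p ∧ ∃ α : ZMod (2 * t + 1),
    (p.1 - x α).val ≤ (p.2 - x α).val ∧ (p.2 - x α).val ≤ (y α - x α).val}

lemma val_sub_of_gt {N : ℕ} [NeZero N] {a b : ZMod N} (h : a.val < b.val) :
    (a - b).val = a.val + N - b.val := by
  have hb : b ≠ 0 := by
    intro h0; rw [h0, ZMod.val_zero] at h; omega
  haveI : NeZero b := ⟨hb⟩
  have hnb : (-b).val = N - b.val := ZMod.val_neg_of_ne_zero b
  have hbv : b.val < N := b.val_lt
  rw [sub_eq_add_neg, ZMod.val_add_of_lt (by omega), hnb]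
  omega

lemma tri_card (A B : ℕ) (hAB : A ≤ B) :
    ((Finset.Icc A B ×ˢ Finset.Icc A B).filter (fun c => c.1 ≤ c.2)).card
      = (B - A + 1) * (B - A + 2) / 2 := by
  classical
  set v := B - A with hv
  have hsplit : (Finset.Icc A B ×ˢ Finset.Icc A B).filter (fun c => c.1 ≤ c.2)
      = (Finset.Icc A B).biUnion (fun a => (Finset.Icc a B).image (fun b => (a, b))) := by
    ext ⟨a, b⟩
    simp only [Finset.mem_filter, Finset.mem_product, Finset.mem_biUnion, Finset.mem_image,
      Finset.mem_Icc, Prod.mk.injEq]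
    constructor
    · rintro ⟨⟨⟨h1, h2⟩, h3, h4⟩, h5⟩
      exact ⟨a, ⟨h1, h2⟩, b, ⟨h5, h4⟩, rfl, rfl⟩
    · rintro ⟨a', ⟨h1, h2⟩, b', ⟨h3, h4⟩, rfl, rfl⟩
      exact ⟨⟨⟨h1, h2⟩, le_trans h1 h3, h4⟩, h3⟩
  rw [hsplit, Finset.card_biUnion]
  · have hcards : ∀ a ∈ Finset.Icc A B,
        ((Finset.Icc a B).image (fun b => (a, b))).card = B + 1 - a := by
      intro a _
      rw [Finset.card_image_of_injective _ (fun b c h => congrArg Prod.snd h),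
        Nat.card_Icc]
    rw [Finset.sum_congr rfl hcards]
    have hr : ∑ a ∈ Finset.Icc A B, (B + 1 - a)
        = ∑ i ∈ Finset.range (v + 1), (B + 1 - (A + i)) := by
      rw [← Finset.Ico_add_one_right_eq_Icc, Finset.sum_Ico_eq_sum_range]
      rw [show B + 1 - A = v + 1 by omega]
    rw [hr]
    have hr2 : ∑ i ∈ Finset.range (v + 1), (B + 1 - (A + i))
        = ∑ i ∈ Finset.range (v + 1), (i + 1) := by
      rw [← Finset.sum_range_reflect]
      apply Finset.sum_congr rfl
      intro i hi
      rw [Finset.mem_range] at hi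
      omega
    rw [hr2]
    have hgauss : (∑ i ∈ Finset.range (v + 1), (i + 1)) * 2 = (v + 1) * (v + 2) := by
      have h1 : ∑ i ∈ Finset.range (v + 1), (i + 1)
          = ∑ i ∈ Finset.range (v + 1), i + (v + 1) := by
        rw [Finset.sum_add_distrib]; simp
      have h2 : (∑ i ∈ Finset.range (v + 1), i) * 2 = (v + 1) * v := by
        simpa using Finset.sum_range_id_mul_two (v + 1)
      rw [h1, Nat.add_mul, h2]
      ring
    exact (Nat.div_eq_of_eq_mul_left (by omega) hgauss.symm).symm
  · intro a _ b _ hab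
    rw [Function.onFun, Finset.disjoint_left]
    rintro ⟨p, q⟩ hp hq
    simp only [Finset.mem_image, Finset.mem_Icc, Prod.mk.injEq] at hp hq
    obtain ⟨_, _, rfl, rfl⟩ := hp
    obtain ⟨_, _, h, _⟩ := hq
    exact hab h.symm


/-- for an alternating cycle `C₀` of size `2t+1` satisfying the Matching
Conditions, with `s_α` the size of `(x_α,y_α)`, the down-set `D(C₀)` has cardinality
`∑ s_α (s_α + 1)/2` and is an independent set in `G_n^k`. -/
theorem downset_card_and_indep (n k t : ℕ) (hn : 3 ≤ n) (ht : 1 ≤ t)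
    (x y : ZMod (2 * t + 1) → ZMod (n + k))
    (hinc : ∀ α : ZMod (2 * t + 1), Incomp n k (x α) (y α))
    (hcyc : ∀ α : ZMod (2 * t + 1), CompLt n k (x α) (y (α - 1)))
    (horder1 : ∀ α : ZMod (2 * t + 1), (x α - x 0).val ≤ (y α - x 0).val)
    (horder2 : ∀ α : ZMod (2 * t + 1), α.val < 2 * t →
      (y α - x 0).val < (x (α + 1) - x 0).val)
    (hmatch : ∀ α : ZMod (2 * t + 1),
      (y (α + (t : ZMod (2 * t + 1))) - x α).val = k) :
    (DownSet n k t x y).ncard =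
      ∑ α : ZMod (2 * t + 1), ((y α - x α).val + 1) * ((y α - x α).val + 2) / 2 ∧
    Indep n k (DownSet n k t x y) := by
  haveI hNZ : NeZero (n + k) := ⟨by omega⟩
  haveI hMZ : NeZero (2 * t + 1) := ⟨by omega⟩
  classical
  set c : ZMod (n + k) → ℕ := fun p => (p - x 0).val with hc
  set X : ℕ → ℕ := fun β => c (x (β : ZMod (2 * t + 1))) with hX
  set Y : ℕ → ℕ := fun β => c (y (β : ZMod (2 * t + 1))) with hY
  have hlt : ∀ p : ZMod (n + k), c p < n + k := fun p => ZMod.val_lt _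
  have F1 : ∀ p q : ZMod (n + k), c q ≤ c p → (p - q).val = c p - c q := by
    intro p q h
    have e : p - q = (p - x 0) - (q - x 0) := by ring
    rw [e, ZMod.val_sub h]
  have F2 : ∀ p q : ZMod (n + k), c p < c q → (p - q).val = c p + (n + k) - c q := by
    intro p q h
    have e : p - q = (p - x 0) - (q - x 0) := by ring
    rw [e, val_sub_of_gt h]
  have F3 : ∀ m : ℕ, m < n + k → c (x 0 + (m : ZMod (n + k))) = m := by
    intro m hm
    simp only [hc]
    rw [add_sub_cancel_left, ZMod.val_cast_of_lt hm]
  have F4 : ∀ p : ZMod (n + k), x 0 + (c p : ZMod (n + k)) = p := by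
    intro p
    simp only [hc]
    rw [ZMod.natCast_rightInverse (p - x 0)]
    ring
  have hXYb : ∀ β : ℕ, X β ≤ Y β := fun β => horder1 _
  have hYXb : ∀ β : ℕ, β < 2 * t → Y β < X (β + 1) := by
    intro β hβ
    have hval : ((β : ZMod (2 * t + 1))).val = β := ZMod.val_cast_of_lt (by omega)
    have h := horder2 (β : ZMod (2 * t + 1)) (by rw [hval]; exact hβ)
    have e : (β : ZMod (2 * t + 1)) + 1 = ((β + 1 : ℕ) : ZMod (2 * t + 1)) := by push_cast; ring
    rw [e] at h
    exact h
  have chain : ∀ b : ℕ, b ≤ 2 * t → ∀ a : ℕ, a ≤ b →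
      X a ≤ X b ∧ Y a ≤ Y b ∧ (a < b → Y a < X b) := by
    intro b
    induction b with
    | zero =>
      intro _ a ha
      interval_cases a
      exact ⟨le_rfl, le_rfl, by omega⟩
    | succ b ih =>
      intro hb a ha
      rcases Nat.lt_or_ge a (b + 1) with h | h
      · obtain ⟨h1, h2, h3⟩ := ih (by omega) a (by omega)
        have h4 := hYXb b (by omega)
        have h5 := hXYb (b + 1)
        have h6 := hXYb a
        exact ⟨by omega, by omega, fun _ => by omega⟩
      · have : a = b + 1 := by omega
        subst this
        exact ⟨le_rfl, le_rfl, by omega⟩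
  have hvk : ∀ β : ℕ, (y (β : ZMod (2 * t + 1)) - x (β : ZMod (2 * t + 1))).val = Y β - X β
      ∧ Y β - X β ≤ k := by
    intro β
    have h1 : (y (β : ZMod (2 * t + 1)) - x (β : ZMod (2 * t + 1))).val = Y β - X β :=
      F1 _ _ (hXYb β)
    have h2 : (y (β : ZMod (2 * t + 1)) - x (β : ZMod (2 * t + 1))).val ≤ k := hinc _
    exact ⟨h1, by omega⟩
  have hmatch1 : ∀ β : ℕ, β ≤ t → Y (β + t) = X β + k := by
    intro β hβ
    have h := hmatch (β : ZMod (2 * t + 1))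
    have e : (β : ZMod (2 * t + 1)) + (t : ZMod (2 * t + 1))
        = ((β + t : ℕ) : ZMod (2 * t + 1)) := by push_cast; ring
    rw [e] at h
    have hle : X β ≤ Y (β + t) := by
      obtain ⟨_, h2, _⟩ := chain (β + t) (by omega) β (by omega)
      have := hXYb β
      omega
    rw [F1 _ _ hle] at h
    have h' : Y (β + t) - X β = k := h
    omega
  have hmatch2 : ∀ β : ℕ, t + 1 ≤ β → β ≤ 2 * t → X β = Y (β - (t + 1)) + n := by
    intro β h1 h2
    have h := hmatch (β : ZMod (2 * t + 1))
    have e : (β : ZMod (2 * t + 1)) + (t : ZMod (2 * t + 1))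
        = ((β - (t + 1) : ℕ) : ZMod (2 * t + 1)) := by
      have e2 : ((β + t : ℕ) : ZMod (2 * t + 1)) = ((β - (t + 1) : ℕ) : ZMod (2 * t + 1)) := by
        rw [show β + t = (β - (t + 1)) + (2 * t + 1) from by omega, Nat.cast_add,
          ZMod.natCast_self, add_zero]
      rw [← e2]; push_cast; ring
    rw [e] at h
    have hlt' : Y (β - (t + 1)) < X β := (chain β (by omega) (β - (t + 1)) (by omega)).2.2 (by omega)
    rw [F2 _ _ hlt'] at h
    have h' : Y (β - (t + 1)) + (n + k) - X β = k := h
    have hXlt : X β < n + k := hlt _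
    omega
  have hkey : ∀ a b : ℕ, a < b → b ≤ 2 * t → Y b ≤ X a + k ∨ Y a + n ≤ X b := by
    intro a b hab hb
    by_cases hcase : b ≤ a + t
    · left
      rcases Nat.lt_or_ge b t with hbt | hbt
      · have h1 := hmatch1 0 (by omega)
        have h2 : Y b ≤ Y (0 + t) := (chain (0 + t) (by omega) b (by omega)).2.1
        have h3 : X 0 ≤ X a := (chain a (by omega) 0 (by omega)).1
        omega
      · have h1 := hmatch1 (b - t) (by omega)
        rw [show b - t + t = b from by omega] at h1
        have h3 : X (b - t) ≤ X a := (chain a (by omega) (b - t) (by omega)).1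
        omega
    · right
      have h1 := hmatch2 (a + t + 1) (by omega) (by omega)
      rw [show a + t + 1 - (t + 1) = a from by omega] at h1
      have h2 : X (a + t + 1) ≤ X b := (chain b (by omega) (a + t + 1) (by omega)).1
      omega
  have hmem : ∀ p : Pair n k, p ∈ DownSet n k t x y ↔
      ∃ β : ℕ, β ≤ 2 * t ∧ X β ≤ c p.1 ∧ c p.1 ≤ c p.2 ∧ c p.2 ≤ Y β := by
    intro p
    constructor
    · rintro ⟨hip, α, h1, h2⟩
      have hα : ((α.val : ℕ) : ZMod (2 * t + 1)) = α := ZMod.natCast_rightInverse α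
      have hXa : X α.val = c (x α) := by simp only [hX]; rw [hα]
      have hYa : Y α.val = c (y α) := by simp only [hY]; rw [hα]
      have hxyα : (y α - x α).val = c (y α) - c (x α) := F1 _ _ (horder1 α)
      have hylt : c (y α) < n + k := hlt _
      have hxy : c (x α) ≤ c (y α) := horder1 α
      have hbI : c (x α) + (p.1 - x α).val < n + k := by omega
      have hbJ : c (x α) + (p.2 - x α).val < n + k := by omega
      have hI : c p.1 = c (x α) + (p.1 - x α).val := by
        have e : p.1 - x 0 = (x α - x 0) + (p.1 - x α) := by ring
        show (p.1 - x 0).val = _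
        rw [e, ZMod.val_add_of_lt (show (x α - x 0).val + (p.1 - x α).val < n + k from hbI)]
      have hJ : c p.2 = c (x α) + (p.2 - x α).val := by
        have e : p.2 - x 0 = (x α - x 0) + (p.2 - x α) := by ring
        show (p.2 - x 0).val = _
        rw [e, ZMod.val_add_of_lt (show (x α - x 0).val + (p.2 - x α).val < n + k from hbJ)]
      refine ⟨α.val, by have := α.val_lt; omega, ?_, ?_, ?_⟩ <;> omega
    · rintro ⟨β, hβ, h1, h2, h3⟩
      have e1 : (p.1 - x (β : ZMod (2 * t + 1))).val = c p.1 - X β := F1 _ _ h1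
      have e2 : (p.2 - x (β : ZMod (2 * t + 1))).val = c p.2 - X β := F1 _ _ (le_trans h1 h2)
      have e3 : (y (β : ZMod (2 * t + 1)) - x (β : ZMod (2 * t + 1))).val = Y β - X β :=
        F1 _ _ (hXYb β)
      have e4 : (p.2 - p.1).val = c p.2 - c p.1 := F1 _ _ h2
      have hk := (hvk β).2
      refine ⟨?_, (β : ZMod (2 * t + 1)), ?_, ?_⟩
      · show (p.2 - p.1).val ≤ k
        omega
      · rw [e1, e2]; omega
      · rw [e2, e3]; omega
  have hindep : Indep n k (DownSet n k t x y) := by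
    constructor
    · intro p hp
      exact hp.1
    · have main : ∀ a b : ℕ, a ≤ b → b ≤ 2 * t → ∀ p q : Pair n k,
          X a ≤ c p.1 → c p.1 ≤ c p.2 → c p.2 ≤ Y a →
          X b ≤ c q.1 → c q.1 ≤ c q.2 → c q.2 ≤ Y b →
          ¬ Adj n k p q := by
        rintro a b hab hb p q ha1 ha2 ha3 hb1 hb2 hb3 ⟨hA1, hA2⟩
        have hA1' : k < (q.2 - p.1).val := hA1
        have hA2' : k < (p.2 - q.1).val := hA2
        rcases Nat.eq_or_lt_of_le hab with rfl | hlt'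
        · have hk := (hvk a).2
          have hq2 : c q.2 < c p.1 := by
            by_contra hcon
            push_neg at hcon
            rw [F1 _ _ hcon] at hA1'
            omega
          have hp2 : c p.2 < c q.1 := by
            by_contra hcon
            push_neg at hcon
            rw [F1 _ _ hcon] at hA2'
            omega
          omega
        · have hYb := (chain b hb a (by omega)).2.2 hlt'
          have e1 : (q.2 - p.1).val = c q.2 - c p.1 := F1 _ _ (by omega)
          have e2 : (p.2 - q.1).val = c p.2 + (n + k) - c q.1 := F2 _ _ (by omega)
          have hka := hkey a b hlt' hb
          omega
      intro p hp q hq hadj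
      obtain ⟨a, hA, h1, h2, h3⟩ := (hmem p).1 hp
      obtain ⟨b, hB, h4, h5, h6⟩ := (hmem q).1 hq
      rcases le_total a b with h | h
      · exact main a b h hB p q h1 h2 h3 h4 h5 h6 hadj
      · exact main b a h hA q p h4 h5 h6 h1 h2 h3 ⟨hadj.2, hadj.1⟩
  refine ⟨?_, hindep⟩
  set D : Finset (Pair n k) := (Finset.range (2 * t + 1)).biUnion (fun β =>
    ((Finset.Icc (X β) (Y β) ×ˢ Finset.Icc (X β) (Y β)).filter (fun cc => cc.1 ≤ cc.2)).image
      (fun cc => (x 0 + (cc.1 : ZMod (n + k)), x 0 + (cc.2 : ZMod (n + k))))) with hD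
  have hmemD : ∀ β : ℕ, ∀ p : Pair n k,
      (p ∈ ((Finset.Icc (X β) (Y β) ×ˢ Finset.Icc (X β) (Y β)).filter
          (fun cc => cc.1 ≤ cc.2)).image
        (fun cc => (x 0 + (cc.1 : ZMod (n + k)), x 0 + (cc.2 : ZMod (n + k)))) ↔
      X β ≤ c p.1 ∧ c p.1 ≤ c p.2 ∧ c p.2 ≤ Y β) := by
    intro β p
    have hY' : Y β < n + k := hlt _
    constructor
    · intro hp
      simp only [Finset.mem_image, Finset.mem_filter, Finset.mem_product, Finset.mem_Icc] at hp
      obtain ⟨⟨c1, c2⟩, ⟨⟨⟨g1, g2⟩, g3, g4⟩, g5⟩, rfl⟩ := hp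
      show X β ≤ c (x 0 + (c1 : ZMod (n + k))) ∧
        c (x 0 + (c1 : ZMod (n + k))) ≤ c (x 0 + (c2 : ZMod (n + k))) ∧
        c (x 0 + (c2 : ZMod (n + k))) ≤ Y β
      rw [F3 c1 (by omega), F3 c2 (by omega)]
      exact ⟨g1, g5, g4⟩
    · rintro ⟨h1, h2, h3⟩
      simp only [Finset.mem_image, Finset.mem_filter, Finset.mem_product, Finset.mem_Icc]
      refine ⟨(c p.1, c p.2), ⟨⟨⟨h1, le_trans h2 h3⟩, le_trans h1 h2, h3⟩, h2⟩, ?_⟩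
      exact Prod.ext (F4 p.1) (F4 p.2)
  have hDset : DownSet n k t x y = ↑D := by
    ext p
    rw [hmem p, Finset.mem_coe, hD, Finset.mem_biUnion]
    constructor
    · rintro ⟨β, hβ, h⟩
      exact ⟨β, Finset.mem_range.2 (by omega), (hmemD β p).2 h⟩
    · rintro ⟨β, hβ, h⟩
      rw [Finset.mem_range] at hβ
      exact ⟨β, by omega, (hmemD β p).1 h⟩
  have hDcard : D.card
      = ∑ β ∈ Finset.range (2 * t + 1), ((Y β - X β) + 1) * ((Y β - X β) + 2) / 2 := by
    rw [hD, Finset.card_biUnion]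
    · apply Finset.sum_congr rfl
      intro β hβ
      rw [Finset.card_image_of_injOn, tri_card _ _ (hXYb β)]
      intro c1 hc1 c2 hc2 heq
      simp only [Finset.coe_filter, Finset.mem_product, Finset.mem_Icc, Set.mem_setOf_eq] at hc1 hc2
      have hY' : Y β < n + k := hlt _
      have e1 := congrArg (fun pp : Pair n k => c pp.1) heq
      have e2 := congrArg (fun pp : Pair n k => c pp.2) heq
      simp only at e1 e2
      rw [F3 _ (by omega), F3 _ (by omega)] at e1
      rw [F3 _ (by omega), F3 _ (by omega)] at e2
      exact Prod.ext e1 e2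
    · intro a ha b hb hab
      rw [Finset.mem_coe, Finset.mem_range] at ha hb
      rw [Function.onFun, Finset.disjoint_left]
      intro p hpa hpb
      have h1 := (hmemD a p).1 hpa
      have h2 := (hmemD b p).1 hpb
      rcases Nat.lt_or_ge a b with h | h
      · have := (chain b (by omega) a (by omega)).2.2 h
        omega
      · have hba : b < a := by omega
        have := (chain a (by omega) b (by omega)).2.2 hba
        omega
  rw [hDset, Set.ncard_coe_finset, hDcard]
  apply Finset.sum_nbij' (i := fun β : ℕ => (β : ZMod (2 * t + 1))) (j := fun α : ZMod (2 * t + 1) => α.val)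
  · intro a _
    exact Finset.mem_univ _
  · intro a _
    exact Finset.mem_range.2 a.val_lt
  · intro a ha
    exact ZMod.val_cast_of_lt (Finset.mem_range.1 ha)
  · intro a _
    exact ZMod.natCast_rightInverse a
  · intro β hβ
    rw [(hvk β).1]


end CrownPaper
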